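/- Define the rate function I(x) = (t_x/2)·x + ∫₁^∞ log(1 - t_x/y²) dy for x > 0, where t_x < 1 solves f(t_x) = x (f as above), and I(x) = ∞ for x ≤ 0. Then I(2) = 0 and I(x) > 0 for x > 0 with x ≠ 2. -/

import Mathlib

open Real Set MeasureTheory Filter Topology


/-- positivity from derivative on `Ici 0` -/
lemma aux_pos_Ici {g g' : ℝ → ℝ} (hd : ∀ x ∈ Ici (0:ℝ), HasDerivAt g (g' x) x)
    (hp : ∀ x, 0 < x → 0 < g' x) (h0 : g 0 = 0) {s : ℝ} (hs : 0 < s) : 0 < g s := by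
  have hmono : StrictMonoOn g (Ici 0) := by
    apply strictMonoOn_of_deriv_pos (convex_Ici 0)
    · exact fun x hx => (hd x hx).continuousAt.continuousWithinAt
    · intro x hx
      rw [interior_Ici] at hx
      rw [(hd x (mem_Ici.mpr (le_of_lt (mem_Ioi.mp hx)))).deriv]
      exact hp x hx
  have := hmono (self_mem_Ici) (le_of_lt hs : (0:ℝ) ≤ s) hs
  rwa [h0] at this

/-- positivity from derivative on `Ico 0 1` -/
lemma aux_pos_Ico {g g' : ℝ → ℝ} (hd : ∀ x ∈ Ico (0:ℝ) 1, HasDerivAt g (g' x) x)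
    (hp : ∀ x ∈ Ioo (0:ℝ) 1, 0 < g' x) (h0 : g 0 = 0) {s : ℝ} (hs0 : 0 < s) (hs1 : s < 1) :
    0 < g s := by
  have hmono : StrictMonoOn g (Ico 0 1) := by
    apply strictMonoOn_of_deriv_pos (convex_Ico 0 1)
    · exact fun x hx => (hd x hx).continuousAt.continuousWithinAt
    · intro x hx
      rw [interior_Ico] at hx
      rw [(hd x ⟨hx.1.le, hx.2⟩).deriv]
      exact hp x hx
  have := hmono ⟨le_refl 0, one_pos⟩ ⟨hs0.le, hs1⟩ hs0
  rwa [h0] at this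

/-- A: `s/(1+s²) < arctan s` for `s > 0` -/
lemma aux_arctan_gt {s : ℝ} (hs : 0 < s) : s / (1 + s^2) < Real.arctan s := by
  have key : 0 < Real.arctan s - s / (1 + s^2) := by
    apply aux_pos_Ici (g' := fun x => 2*x^2/(1+x^2)^2) ?_ ?_ (by simp) hs
    · intro x _
      have h1 : (1:ℝ) + x^2 ≠ 0 := by positivity
      have d1 : HasDerivAt (fun x : ℝ => x / (1 + x^2))
          ((1*(1+x^2) - x*(2*x))/(1+x^2)^2) x := by
        have dnum : HasDerivAt (fun x : ℝ => x) 1 x := hasDerivAt_id x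
        have dden : HasDerivAt (fun x : ℝ => 1 + x^2) (2*x) x := by
          simpa using (hasDerivAt_pow 2 x).const_add 1
        simpa using dnum.fun_div dden h1
      have := (Real.hasDerivAt_arctan x).sub d1
      refine this.congr_deriv ?_
      field_simp
      ring
    · intro x hx
      positivity
  linarith

/-- arctan s < s for s > 0 -/
lemma aux_arctan_lt {s : ℝ} (hs : 0 < s) : Real.arctan s < s := by
  have key : 0 < s - Real.arctan s := by
    apply aux_pos_Ici (g' := fun x => 1 - 1/(1+x^2)) ?_ ?_ (by simp) hs
    · intro x _
      exact (hasDerivAt_id x).sub (Real.hasDerivAt_arctan x)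
    · intro x hx
      have h1 : (1:ℝ) < 1 + x^2 := by nlinarith
      have : 1/(1+x^2) < 1 := by
        rw [div_lt_one (by positivity)]; exact h1
      linarith
  linarith

/-- D: `0 < s·arctan s - log(1+s²)` for `s > 0` -/
lemma aux_psi_pos {s : ℝ} (hs : 0 < s) : 0 < s * Real.arctan s - Real.log (1 + s^2) := by
  apply aux_pos_Ici (g' := fun x => Real.arctan x - x/(1+x^2)) ?_ ?_ (by simp) hs
  · intro x _
    have h1 : (1:ℝ) + x^2 ≠ 0 := by positivity
    have d1 : HasDerivAt (fun x : ℝ => x * Real.arctan x)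
        (1 * Real.arctan x + x * (1/(1+x^2))) x :=
      (hasDerivAt_id x).mul (Real.hasDerivAt_arctan x)
    have d2 : HasDerivAt (fun x : ℝ => Real.log (1 + x^2)) ((2*x)/(1+x^2)) x := by
      have dden : HasDerivAt (fun x : ℝ => 1 + x^2) (2*x) x := by
        simpa using (hasDerivAt_pow 2 x).const_add 1
      exact dden.log h1
    have := d1.sub d2
    refine this.congr_deriv ?_
    field_simp
    ring
  · intro x hx
    have := aux_arctan_gt hx
    linarith
/-- derivative helper for log(1+x), log(1-x) on Ico 0 1 -/
lemma aux_dlog1p {x : ℝ} (hx : -1 < x) : HasDerivAt (fun x : ℝ => Real.log (1 + x)) (1/(1+x)) x := by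
  have h : (1:ℝ) + x ≠ 0 := by linarith
  simpa using ((hasDerivAt_id x).const_add 1).log h

lemma aux_dlog1m {x : ℝ} (hx : x < 1) : HasDerivAt (fun x : ℝ => Real.log (1 - x)) (-(1/(1-x))) x := by
  have h : (1:ℝ) - x ≠ 0 := by linarith
  have := ((hasDerivAt_id x).const_sub 1).log h
  exact this.congr_deriv (by simp only [id_eq, neg_div])

/-- E: `2s < log(1+s) - log(1-s)` for `0 < s < 1` -/
lemma aux_log_gt {s : ℝ} (hs0 : 0 < s) (hs1 : s < 1) :
    2*s < Real.log (1+s) - Real.log (1-s) := by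
  have key : 0 < Real.log (1+s) - Real.log (1-s) - 2*s := by
    apply aux_pos_Ico (g' := fun x => 1/(1+x) + 1/(1-x) - 2) ?_ ?_ (by simp) hs0 hs1
    · intro x hx
      have d := ((aux_dlog1p (by linarith [hx.1])).sub (aux_dlog1m hx.2)).sub
        ((hasDerivAt_id x).const_mul 2)
      refine d.congr_deriv ?_
      ring
    · intro x hx
      obtain ⟨h0, h1⟩ := hx
      have ha : (0:ℝ) < 1 + x := by linarith
      have hb : (0:ℝ) < 1 - x := by linarith
      show 0 < 1/(1+x) + 1/(1-x) - 2
      have : 1/(1+x) + 1/(1-x) - 2 = 2*x^2/((1+x)*(1-x)) := by field_simp; ring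
      rw [this]
      positivity
  linarith

/-- B: `log(1+s) - log(1-s) < 2s/(1-s²)` for `0 < s < 1` -/
lemma aux_log_lt {s : ℝ} (hs0 : 0 < s) (hs1 : s < 1) :
    Real.log (1+s) - Real.log (1-s) < 2*s/(1-s^2) := by
  have key : 0 < 2*s/(1-s^2) - (Real.log (1+s) - Real.log (1-s)) := by
    apply aux_pos_Ico (g' := fun x => 4*x^2/(1-x^2)^2) ?_ ?_ (by simp) hs0 hs1
    · intro x hx
      obtain ⟨h0, h1⟩ := hx
      have ha : (0:ℝ) < 1 + x := by linarith
      have hb : (0:ℝ) < 1 - x := by linarith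
      have hden : (1:ℝ) - x^2 ≠ 0 := by nlinarith
      have dfrac : HasDerivAt (fun x : ℝ => 2*x/(1-x^2))
          ((2*(1-x^2) - 2*x*(-(2*x)))/(1-x^2)^2) x := by
        have dnum : HasDerivAt (fun x : ℝ => 2*x) 2 x := by
          simpa using (hasDerivAt_id x).const_mul 2
        have dden : HasDerivAt (fun x : ℝ => 1 - x^2) (-(2*x)) x := by
          simpa using (hasDerivAt_pow 2 x).const_sub 1
        simpa using dnum.fun_div dden hden
      have d := dfrac.sub ((aux_dlog1p (by linarith)).sub (aux_dlog1m h1))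
      refine d.congr_deriv ?_
      field_simp
      ring
    · intro x hx
      obtain ⟨h0, h1⟩ := hx
      have hden : (0:ℝ) < 1 - x^2 := by nlinarith
      show 0 < 4*x^2/(1-x^2)^2
      positivity
  linarith

/-- C: `(2+s)log(1+s) + (2-s)log(1-s) < 0` for `0 < s < 1` -/
lemma aux_phi_neg {s : ℝ} (hs0 : 0 < s) (hs1 : s < 1) :
    (2+s) * Real.log (1+s) + (2-s) * Real.log (1-s) < 0 := by
  have key : 0 < -((2+s) * Real.log (1+s) + (2-s) * Real.log (1-s)) := by
    apply aux_pos_Ico (g' := fun x => 2*x/(1-x^2) - (Real.log (1+x) - Real.log (1-x)))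
      ?_ ?_ (by simp) hs0 hs1
    · intro x hx
      obtain ⟨h0, h1⟩ := hx
      have ha : (0:ℝ) < 1 + x := by linarith
      have hb : (0:ℝ) < 1 - x := by linarith
      have d1 : HasDerivAt (fun x : ℝ => (2+x) * Real.log (1+x))
          (1 * Real.log (1+x) + (2+x) * (1/(1+x))) x :=
        ((hasDerivAt_id x).const_add 2).mul (aux_dlog1p (by linarith))
      have d2 : HasDerivAt (fun x : ℝ => (2-x) * Real.log (1-x))
          ((-1) * Real.log (1-x) + (2-x) * (-(1/(1-x)))) x := by
        have : HasDerivAt (fun x : ℝ => 2 - x) (-1) x := by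
          simpa using (hasDerivAt_id x).const_sub 2
        exact this.mul (aux_dlog1m h1)
      have d := (d1.add d2).neg
      refine d.congr_deriv ?_
      have hden : (1:ℝ) - x^2 ≠ 0 := by nlinarith
      field_simp
      ring
    · intro x hx
      have := aux_log_lt hx.1 hx.2
      linarith
  linarith
/-- the `y·log(1 - t/y²) → 0` limit -/
lemma aux_tendsto_ylog (t : ℝ) :
    Tendsto (fun y : ℝ => y * Real.log (1 - t/y^2)) atTop (𝓝 0) := by
  have h2 : Tendsto (fun y : ℝ => y^2 * Real.log (1 + (-t)/y^2)) atTop (𝓝 (-t)) :=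
    (Real.tendsto_mul_log_one_add_div_atTop (-t)).comp (tendsto_pow_atTop two_ne_zero)
  have h3 : Tendsto (fun y : ℝ => y⁻¹ * (y^2 * Real.log (1 + (-t)/y^2))) atTop (𝓝 (0 * (-t))) :=
    tendsto_inv_atTop_zero.mul h2
  rw [zero_mul] at h3
  refine h3.congr' ?_
  filter_upwards [eventually_gt_atTop (0:ℝ)] with y hy
  have hy0 : y ≠ 0 := ne_of_gt hy
  rw [neg_div, ← sub_eq_add_neg]
  field_simp

/-- Integral computation, `t = s² ∈ (0,1)` case. -/
lemma aux_integral_pos (s : ℝ) (hs0 : 0 < s) (hs1 : s < 1) :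
    ∫ y in Ioi (1:ℝ), Real.log (1 - s^2/y^2)
      = -Real.log (1 - s^2) - s * Real.log ((1+s)/(1-s)) := by
  set F : ℝ → ℝ := fun y => y * Real.log (1 - s^2/y^2)
    + s * Real.log (y + s) - s * Real.log (y - s) with hF_def
  have hF : ∀ y ∈ Ici (1:ℝ), HasDerivAt F (Real.log (1 - s^2/y^2)) y := by
    intro y hy
    have hy1 : (1:ℝ) ≤ y := hy
    have hy0 : (0:ℝ) < y := lt_of_lt_of_le one_pos hy1
    have hys : s < y := lt_of_lt_of_le hs1 hy1
    have hy2 : (y:ℝ)^2 ≠ 0 := by positivity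
    have hden : 0 < 1 - s^2/y^2 := by
      rw [sub_pos, div_lt_one (by positivity)]
      nlinarith
    have dpow : HasDerivAt (fun y : ℝ => y^2) (2*y) y := by
      simpa using hasDerivAt_pow 2 y
    have dden : HasDerivAt (fun y : ℝ => 1 - s^2/y^2)
        (-((0*y^2 - s^2*(2*y))/(y^2)^2)) y := by
      have := ((hasDerivAt_const y (s^2)).div dpow hy2).const_sub 1
      simpa using this
    have d2 := dden.log (ne_of_gt hden)
    have d3 := (hasDerivAt_id y).mul d2
    have d4 : HasDerivAt (fun y : ℝ => Real.log (y + s)) (1/(y+s)) y := by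
      have h : y + s ≠ 0 := ne_of_gt (by linarith)
      simpa using ((hasDerivAt_id y).add_const s).log h
    have d5 : HasDerivAt (fun y : ℝ => Real.log (y - s)) (1/(y-s)) y := by
      have h : y - s ≠ 0 := ne_of_gt (by linarith)
      simpa using ((hasDerivAt_id y).sub_const s).log h
    have d := (d3.add (d4.const_mul s)).sub (d5.const_mul s)
    simp only [id_eq] at d
    refine d.congr_deriv ?_
    have h1 : y + s ≠ 0 := ne_of_gt (by linarith)
    have h2 : y - s ≠ 0 := ne_of_gt (by linarith)
    have h3 : (1:ℝ) - s^2/y^2 ≠ 0 := ne_of_gt hden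
    have hyy : y^2 - s^2 ≠ 0 := ne_of_gt (by nlinarith)
    have e1 : -((0*y^2 - s^2*(2*y))/(y^2)^2) / (1 - s^2/y^2) = 2*s^2/(y*(y^2-s^2)) := by
      field_simp
      ring
    rw [e1]
    have e2 : y*(2*s^2/(y*(y^2-s^2))) + s*(1/(y+s)) - s*(1/(y-s)) = 0 := by
      field_simp
      ring
    linarith [e2]
  have hneg : ∀ y ∈ Ioi (1:ℝ), Real.log (1 - s^2/y^2) ≤ 0 := by
    intro y hy
    have hy0 : (0:ℝ) < y := lt_trans one_pos hy
    apply Real.log_nonpos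
    · rw [sub_nonneg, div_le_one (by positivity)]
      nlinarith [le_of_lt (mem_Ioi.mp hy)]
    · have : 0 ≤ s^2/y^2 := by positivity
      linarith
  have hT : Tendsto F atTop (𝓝 0) := by
    have T1 := aux_tendsto_ylog (s^2)
    have T2 : Tendsto (fun y : ℝ => s * Real.log (y + s) - s * Real.log (y - s))
        atTop (𝓝 0) := by
      have hq : Tendsto (fun y : ℝ => 1 + 2*s/(y - s)) atTop (𝓝 1) := by
        have h0 : Tendsto (fun y : ℝ => 2*s/(y - s)) atTop (𝓝 0) :=
          Tendsto.div_atTop tendsto_const_nhds (tendsto_atTop_add_const_right atTop (-s) tendsto_id)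
        simpa using tendsto_const_nhds.add h0
      have hlog : Tendsto (fun y : ℝ => Real.log (1 + 2*s/(y - s))) atTop (𝓝 (Real.log 1)) :=
        ((Real.continuousAt_log one_ne_zero).tendsto).comp hq
      rw [Real.log_one] at hlog
      have hmul := hlog.const_mul s
      rw [mul_zero] at hmul
      refine hmul.congr' ?_
      filter_upwards [eventually_gt_atTop s] with y hy
      have h1 : y + s ≠ 0 := ne_of_gt (by linarith)
      have h2 : (0:ℝ) < y - s := by linarith
      have key : 1 + 2*s/(y - s) = (y + s)/(y - s) := by field_simp; ring
      rw [key, Real.log_div h1 (ne_of_gt h2), mul_sub]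
    have := T1.add T2
    rw [add_zero] at this
    refine this.congr ?_
    intro y
    simp only [hF_def]
    ring
  have := integral_Ioi_of_hasDerivAt_of_nonpos' hF hneg hT
  rw [this, hF_def]
  have h1 : (1:ℝ) + s ≠ 0 := ne_of_gt (by linarith)
  have h2 : (1:ℝ) - s ≠ 0 := ne_of_gt (by linarith)
  simp only [one_pow, div_one, one_mul]
  rw [Real.log_div h1 h2]
  ring

/-- Integral computation, `t = -s² < 0` case. -/
lemma aux_integral_neg (s : ℝ) (hs0 : 0 < s) :
    ∫ y in Ioi (1:ℝ), Real.log (1 + s^2/y^2)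
      = -Real.log (1 + s^2) + 2*s*Real.arctan s := by
  set F : ℝ → ℝ := fun y => y * Real.log (1 + s^2/y^2) + 2*s * Real.arctan (y/s) with hF_def
  have hF : ∀ y ∈ Ici (1:ℝ), HasDerivAt F (Real.log (1 + s^2/y^2)) y := by
    intro y hy
    have hy1 : (1:ℝ) ≤ y := hy
    have hy0 : (0:ℝ) < y := lt_of_lt_of_le one_pos hy1
    have hy2 : (y:ℝ)^2 ≠ 0 := by positivity
    have hden : 0 < 1 + s^2/y^2 := by positivity
    have dpow : HasDerivAt (fun y : ℝ => y^2) (2*y) y := by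
      simpa using hasDerivAt_pow 2 y
    have dden : HasDerivAt (fun y : ℝ => 1 + s^2/y^2)
        ((0*y^2 - s^2*(2*y))/(y^2)^2) y := by
      have := ((hasDerivAt_const y (s^2)).div dpow hy2).const_add 1
      simpa using this
    have d2 := dden.log (ne_of_gt hden)
    have d3 := (hasDerivAt_id y).mul d2
    have d4 : HasDerivAt (fun y : ℝ => Real.arctan (y/s)) (1/(1+(y/s)^2) * (1/s)) y := by
      have hd : HasDerivAt (fun y : ℝ => y/s) (1/s) y := by
        simpa using (hasDerivAt_id y).div_const s
      exact (Real.hasDerivAt_arctan (y/s)).comp y hd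
    have d := d3.add ((d4.const_mul (2*s)))
    simp only [id_eq] at d
    refine d.congr_deriv ?_
    have h3 : (1:ℝ) + s^2/y^2 ≠ 0 := ne_of_gt hden
    have hs' : s ≠ 0 := ne_of_gt hs0
    have hyy : y^2 + s^2 ≠ 0 := by positivity
    have e1 : (0*y^2 - s^2*(2*y))/(y^2)^2 / (1 + s^2/y^2) = -(2*s^2/(y*(y^2+s^2))) := by
      field_simp
      ring
    rw [e1]
    have e2 : 1/(1+(y/s)^2) * (1/s) = s/(y^2+s^2) := by
      rw [div_pow]
      field_simp
      ring
    rw [e2]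
    have e3 : y*(-(2*s^2/(y*(y^2+s^2)))) + 2*s*(s/(y^2+s^2)) = 0 := by
      field_simp
      ring
    linarith [e3]
  have hpos : ∀ y ∈ Ioi (1:ℝ), 0 ≤ Real.log (1 + s^2/y^2) := by
    intro y hy
    have hy0 : (0:ℝ) < y := lt_trans one_pos hy
    apply Real.log_nonneg
    have : 0 ≤ s^2/y^2 := by positivity
    linarith
  have hT : Tendsto F atTop (𝓝 (2*s*(π/2))) := by
    have T1 : Tendsto (fun y : ℝ => y * Real.log (1 + s^2/y^2)) atTop (𝓝 0) := by
      have := aux_tendsto_ylog (-(s^2))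
      refine this.congr ?_
      intro y
      rw [neg_div, sub_neg_eq_add]
    have T2 : Tendsto (fun y : ℝ => 2*s * Real.arctan (y/s)) atTop (𝓝 (2*s*(π/2))) := by
      have hdiv : Tendsto (fun y : ℝ => y/s) atTop atTop :=
        tendsto_id.atTop_div_const hs0
      have := (tendsto_nhds_of_tendsto_nhdsWithin Real.tendsto_arctan_atTop).comp hdiv
      exact this.const_mul (2*s)
    have := T1.add T2
    rw [zero_add] at this
    exact this
  have := integral_Ioi_of_hasDerivAt_of_nonneg' hF hpos hT
  rw [this, hF_def]
  simp only [one_pow, div_one, one_mul]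
  have h1 : (1:ℝ)/s = (s:ℝ)⁻¹ := one_div s
  rw [show (1:ℝ)/s = (s:ℝ)⁻¹ from one_div s] at *
  rw [Real.arctan_inv_of_pos hs0]
  ring
/-- The function `f` from the paper, defined piecewise on `(-∞, 1)`. -/
noncomputable def kingmanF (t : ℝ) : ℝ :=
  if 0 < t then (1 / Real.sqrt t) * Real.log ((1 + Real.sqrt t) / (1 - Real.sqrt t))
  else if t = 0 then 2
  else (2 / Real.sqrt |t|) * Real.arctan (Real.sqrt |t|)

lemma kingmanF_zero : kingmanF 0 = 2 := by simp [kingmanF]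

lemma kingmanF_pos_eq {t : ℝ} (h : 0 < t) :
    kingmanF t = (1 / Real.sqrt t) * Real.log ((1 + Real.sqrt t) / (1 - Real.sqrt t)) :=
  if_pos h

lemma kingmanF_neg_eq {t : ℝ} (h : t < 0) :
    kingmanF t = (2 / Real.sqrt (-t)) * Real.arctan (Real.sqrt (-t)) := by
  rw [kingmanF, if_neg (by linarith), if_neg (by linarith), abs_of_neg h]

lemma aux_f_eq_two {t : ℝ} (hlt : t < 1) (h : kingmanF t = 2) : t = 0 := by
  rcases lt_trichotomy t 0 with hn | h0 | hp
  · exfalso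
    rw [kingmanF_neg_eq hn] at h
    set s := Real.sqrt (-t) with hsdef
    have hs0 : 0 < s := Real.sqrt_pos.mpr (by linarith)
    have hal := aux_arctan_lt hs0
    have : 2/s * Real.arctan s < 2 := by
      rw [div_mul_eq_mul_div, div_lt_iff₀ hs0]
      linarith
    linarith
  · exact h0
  · exfalso
    rw [kingmanF_pos_eq hp] at h
    set s := Real.sqrt t with hsdef
    have hs0 : 0 < s := Real.sqrt_pos.mpr hp
    have hs2 : s^2 = t := Real.sq_sqrt hp.le
    have hs1 : s < 1 := by nlinarith
    have h1 : (1:ℝ) + s ≠ 0 := ne_of_gt (by linarith)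
    have h2 : (1:ℝ) - s ≠ 0 := ne_of_gt (by linarith)
    rw [Real.log_div h1 h2] at h
    have hgt := aux_log_gt hs0 hs1
    have : 1/s * (Real.log (1+s) - Real.log (1-s)) > 2 := by
      rw [one_div, inv_mul_eq_div, gt_iff_lt, lt_div_iff₀ hs0]
      linarith
    linarith

/-- The rate function `I(x) = (t_x/2)x + ∫₁^∞ log(1 - t_x/y²) dy`, where `t_x < 1`
solves `f(t_x) = x`, satisfies `I(2) = 0` and `I(x) > 0` for `x > 0`, `x ≠ 2`. -/
theorem kingman_rate_function_min (tx : ℝ → ℝ)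
    (htx : ∀ x : ℝ, 0 < x → tx x < 1 ∧ kingmanF (tx x) = x)
    (I : ℝ → ℝ)
    (hI : ∀ x : ℝ, 0 < x →
      I x = tx x / 2 * x + ∫ y in Ioi (1:ℝ), Real.log (1 - tx x / y ^ 2)) :
    I 2 = 0 ∧ ∀ x : ℝ, 0 < x → x ≠ 2 → 0 < I x := by
  constructor
  · obtain ⟨hlt, hf⟩ := htx 2 (by norm_num)
    have ht0 : tx 2 = 0 := aux_f_eq_two hlt hf
    rw [hI 2 (by norm_num), ht0]
    simp
  · intro x hx hne
    obtain ⟨hlt, hf⟩ := htx x hx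
    have ht0 : tx x ≠ 0 := by
      intro h
      exact hne (by rw [← hf, h, kingmanF_zero])
    rw [hI x hx]
    rcases ht0.lt_or_gt with hn | hp
    · -- t < 0
      set t := tx x with htdef
      set s := Real.sqrt (-t) with hsdef
      have hs0 : 0 < s := Real.sqrt_pos.mpr (by linarith)
      have hs2 : s^2 = -t := Real.sq_sqrt (by linarith)
      have hts : t = -s^2 := by linarith
      have hint : (∫ y in Ioi (1:ℝ), Real.log (1 - t / y ^ 2))
          = -Real.log (1 + s^2) + 2*s*Real.arctan s := by
        have : ∀ y : ℝ, Real.log (1 - t/y^2) = Real.log (1 + s^2/y^2) := by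
          intro y
          rw [hts, neg_div, sub_neg_eq_add]
        simp only [this]
        exact aux_integral_neg s hs0
      rw [hint, ← hf, kingmanF_neg_eq hn, ← hsdef]
      have e : t/2 * (2/s * Real.arctan s) = -(s * Real.arctan s) := by
        rw [hts]
        field_simp
      rw [e]
      have := aux_psi_pos hs0
      linarith
    · -- 0 < t
      set t := tx x with htdef
      set s := Real.sqrt t with hsdef
      have hs0 : 0 < s := Real.sqrt_pos.mpr hp
      have hs2 : s^2 = t := Real.sq_sqrt hp.le
      have hs1 : s < 1 := by nlinarith
      have h1 : (1:ℝ) + s ≠ 0 := ne_of_gt (by linarith)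
      have h2 : (1:ℝ) - s ≠ 0 := ne_of_gt (by linarith)
      have hint : (∫ y in Ioi (1:ℝ), Real.log (1 - t / y ^ 2))
          = -Real.log (1 - s^2) - s * Real.log ((1+s)/(1-s)) := by
        have : ∀ y : ℝ, Real.log (1 - t/y^2) = Real.log (1 - s^2/y^2) := by
          intro y
          rw [← hs2]
        simp only [this]
        exact aux_integral_pos s hs0 hs1
      rw [hint, ← hf, kingmanF_pos_eq hp, ← hsdef]
      rw [Real.log_div h1 h2]
      have hfac : (1:ℝ) - s^2 = (1+s)*(1-s) := by ring
      rw [hfac, Real.log_mul h1 h2]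
      have e : t/2 * (1/s * (Real.log (1+s) - Real.log (1-s)))
          = s/2 * (Real.log (1+s) - Real.log (1-s)) := by
        rw [← hs2]
        field_simp
      rw [e]
      have := aux_phi_neg hs0 hs1
      linarith
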